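/- Fix Δ ∈ [0,∞). Assume |p(t)| ≤ 1 for almost every t and τ_m ≤ Δ. If x is a solution of x''(t) + p(t)·x(t − τ(t)) = 0 on [0, θ_Δ] with x(θ_Δ) = 0, then (max_{t∈[−τ_m,0]} |x(t)|) · r_Δ(t) ≥ |x(t)| for all t ∈ [0, θ_Δ]. -/

import Mathlib

open MeasureTheory Set Filter

/-- `x` solves the delay equation `x''(t) + p(t)·x(t − τ(t)) = 0` on `I` in the
Carathéodory sense: `x` is differentiable on `I` and on `I` its derivative is an
indefinite integral of `-p(u)·x(u − τ(u))` (so `x` and its derivative are locally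
absolutely continuous there, and the equation holds for a.e. `t ∈ I`). -/
def SolvesDDE (p τ x : ℝ → ℝ) (I : Set ℝ) : Prop :=
  (∀ t ∈ I, HasDerivAt x (deriv x t) t) ∧
  (∀ t₀ ∈ I, ∀ t ∈ I, deriv x t = deriv x t₀ - ∫ u in t₀..t, p u * x (u - τ u))

/-- `r` is the solution `r_Δ` of `r''(t) + r(t − Δ) = 0`, `t ≥ 0`, with `r ≡ 1` on
`(-∞,0]` and `r'(0) = 0` (the derivative is an indefinite integral of `-r(· - Δ)`). -/
def IsDelayCosine (Δ : ℝ) (r : ℝ → ℝ) : Prop :=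
  (∀ t ≤ (0:ℝ), r t = 1) ∧
  (∀ t, 0 ≤ t → HasDerivAt r (deriv r t) t) ∧
  (∀ t, 0 ≤ t → deriv r t = - ∫ u in (0:ℝ)..t, r (u - Δ))

/-- `θ` is the first zero of `r` on `[0,∞)`. -/
def IsFirstZero (r : ℝ → ℝ) (θ : ℝ) : Prop :=
  0 < θ ∧ r θ = 0 ∧ ∀ t, 0 ≤ t → t < θ → 0 < r t

/-- `g(w) = ρ·r(θ − w − Δ)·χ_{[−Δ,0]}(w)`. -/
noncomputable def gAux (ρ Δ θ : ℝ) (r : ℝ → ℝ) : ℝ → ℝ :=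
  (Set.Icc (-Δ) (0:ℝ)).indicator fun w => ρ * r (θ - w - Δ)

/-- The double integral `∫_{-c}^0 (∫_{-c}^s max (β w) (g w) dw) ds`. -/
noncomputable def doubleInt (g β : ℝ → ℝ) (c : ℝ) : ℝ :=
  ∫ s in (-c)..(0:ℝ), ∫ w in (-c)..s, max (β w) (g w)

/-- The recursively defined sequences `β_n`, `ϖ_n` associated with `g`. -/
def IsBetaSeq (g : ℝ → ℝ) (β : ℕ → ℝ → ℝ) (ϖ : ℕ → ℝ) : Prop :=
  (∀ t ≤ (0:ℝ), β 0 t = 1) ∧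
  ∀ n : ℕ,
    (0 < ϖ n ∧ doubleInt g (β n) (ϖ n) = 1) ∧
    (∀ t, t ≤ -ϖ n → β (n+1) t = 1) ∧
    (∀ t, -ϖ n ≤ t → t ≤ 0 →
      β (n+1) t = 1 - ∫ s in (-ϖ n)..t, ∫ w in (-ϖ n)..s, max (β n w) (g w))

/-- `x` has a locally absolutely continuous derivative on `[a,b]`, with a.e. second
derivative `w`. -/
def HasSecondDerivAEOn (x w : ℝ → ℝ) (a b : ℝ) : Prop :=
  (∀ t ∈ Set.Icc a b, HasDerivAt x (deriv x t) t) ∧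
  (∀ t ∈ Set.Icc a b, deriv x t = deriv x a + ∫ u in a..t, w u)

/-- descent upper bound (Corollary of the backward comparison). -/
theorem descent_upper_bound
    (Δ : ℝ) (hΔ : 0 ≤ Δ) (p τ x r : ℝ → ℝ) (θ : ℝ)
    (hpm : Measurable p) (hτm : Measurable τ) (hτ0 : ∀ t, 0 ≤ τ t)
    (hτb : ∃ M, ∀ᵐ t ∂(volume : Measure ℝ), |τ t| ≤ M)
    (hp1 : ∀ᵐ t ∂(volume : Measure ℝ), |p t| ≤ 1)
    (hτΔ : essSup τ volume ≤ Δ)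
    (hr : IsDelayCosine Δ r) (hθ : IsFirstZero r θ)
    (hx : SolvesDDE p τ x (Set.Icc 0 θ))
    (hxcont : ContinuousOn x (Set.Icc (-(essSup τ volume)) (0:ℝ)))
    (hxθ : x θ = 0) :
    ∀ t ∈ Set.Icc (0:ℝ) θ,
      |x t| ≤ (sSup ((fun u => |x u|) '' Set.Icc (-(essSup τ volume)) (0:ℝ))) * r t := by
  obtain ⟨hxD, hxI⟩ := hx
  obtain ⟨hr1, hrD, hrI⟩ := hr
  obtain ⟨hθpos, hrθ, hrpos⟩ := hθ
  set tm := essSup τ volume with htm_def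
  obtain ⟨Mb, hMb⟩ := hτb
  have hbd : Filter.IsBoundedUnder (· ≤ ·) (ae (volume : Measure ℝ)) τ := by
    refine ⟨Mb, ?_⟩
    rw [Filter.eventually_map]
    filter_upwards [hMb] with t h using (abs_le.1 h).2
  have hτ_ae : ∀ᵐ u ∂(volume : Measure ℝ), τ u ≤ tm := ae_le_essSup hbd
  have htm0 : (0:ℝ) ≤ tm :=
    Filter.le_limsup_of_frequently_le ((Filter.Eventually.of_forall hτ0).frequently) hbd
  have htmΔ : tm ≤ Δ := hτΔ
  -- continuity of r
  have hrcont : Continuous r := by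
    rw [continuous_iff_continuousAt]
    intro t
    rcases lt_or_ge t 0 with h | h
    · have hev : r =ᶠ[nhds t] fun _ => (1:ℝ) := by
        filter_upwards [Iio_mem_nhds h] with s hs using hr1 s hs.le
      exact continuousAt_const.congr hev.symm
    · exact (hrD t h).continuousAt
  have hrnn : ∀ t, t ≤ θ → 0 ≤ r t := by
    intro t ht
    rcases le_or_gt t 0 with h | h
    · rw [hr1 t h]; norm_num
    · rcases lt_or_eq_of_le ht with h2 | h2
      · exact (hrpos t h.le h2).le
      · rw [h2, hrθ]
  have hrshift_int : ∀ a b : ℝ, IntervalIntegrable (fun u => r (u - Δ)) volume a b := by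
    intro a b
    exact (hrcont.comp (continuous_id.sub continuous_const)).intervalIntegrable a b
  have hderiv_r_nonpos : ∀ t, 0 ≤ t → t ≤ θ → deriv r t ≤ 0 := by
    intro t h0 ht
    rw [hrI t h0]
    have h1 : 0 ≤ ∫ u in (0:ℝ)..t, r (u - Δ) := by
      apply intervalIntegral.integral_nonneg h0
      intro u hu
      exact hrnn _ (by linarith [hu.2])
    linarith
  have hrAnti : AntitoneOn r (Icc 0 θ) := by
    apply antitoneOn_of_deriv_nonpos (convex_Icc 0 θ) hrcont.continuousOn
    · intro t ht
      rw [interior_Icc] at ht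
      exact ((hrD t ht.1.le).differentiableAt).differentiableWithinAt
    · intro t ht
      rw [interior_Icc] at ht
      exact hderiv_r_nonpos t ht.1.le ht.2.le
  have hrmono : ∀ s t : ℝ, s ≤ t → t ≤ θ → r t ≤ r s := by
    intro s t hst htθ
    rcases le_or_gt t 0 with h | h
    · rw [hr1 t h, hr1 s (hst.trans h)]
    · rcases le_or_gt 0 s with h2 | h2
      · exact hrAnti ⟨h2, hst.trans htθ⟩ ⟨h2.trans hst, htθ⟩ hst
      · have h3 : r t ≤ r 0 := hrAnti ⟨le_rfl, hθpos.le⟩ ⟨h.le, htθ⟩ h.le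
        rw [hr1 0 le_rfl] at h3
        rw [hr1 s h2.le]
        exact h3
  have hr0 : r 0 = 1 := hr1 0 le_rfl
  have hdrθ : deriv r θ < 0 := by
    rw [hrI θ hθpos.le]
    have hpos : 0 < ∫ u in (0:ℝ)..θ, r (u - Δ) := by
      apply intervalIntegral.intervalIntegral_pos_of_pos_on (hrshift_int 0 θ) ?_ hθpos
      intro u hu
      rcases le_or_gt (u - Δ) 0 with h | h
      · rw [hr1 _ h]; norm_num
      · exact hrpos _ h.le (by linarith [hu.2])
    linarith
  -- continuity of x
  have hxc0θ : ContinuousOn x (Icc 0 θ) := fun s hs => ((hxD s hs).continuousAt).continuousWithinAt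
  have hxc : ContinuousOn x (Icc (-tm) θ) := by
    intro s hs
    rcases lt_or_ge s 0 with h | h
    · have h1 : ContinuousWithinAt x (Icc (-tm) 0) s := hxcont s ⟨hs.1, h.le⟩
      apply h1.mono_of_mem_nhdsWithin
      have h2 : Iio (0:ℝ) ∩ Icc (-tm) θ ∈ nhdsWithin s (Icc (-tm) θ) :=
        Filter.inter_mem (mem_nhdsWithin_of_mem_nhds (Iio_mem_nhds h)) self_mem_nhdsWithin
      exact Filter.mem_of_superset h2 (fun u hu => ⟨hu.2.1, hu.1.le⟩)
    · exact ((hxD s ⟨h, hs.2⟩).continuousAt).continuousWithinAt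
  -- the bound M
  set M := sSup ((fun u => |x u|) '' Icc (-tm) (0:ℝ)) with hM_def
  have hM : ∀ s ∈ Icc (-tm) (0:ℝ), |x s| ≤ M := by
    intro s hs
    apply le_csSup
    · exact (isCompact_Icc.image_of_continuousOn hxcont.abs).bddAbove
    · exact mem_image_of_mem _ hs
  have h0mem : (0:ℝ) ∈ Icc (-tm) (0:ℝ) := ⟨neg_nonpos.2 htm0, le_rfl⟩
  have hM0 : 0 ≤ M := (abs_nonneg _).trans (hM 0 h0mem)
  -- integrability of the forcing term
  have hFint : IntervalIntegrable (fun u => p u * x (u - τ u)) volume 0 θ := by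
    set c : ℝ → ℝ := fun s => min (max s (-tm)) θ with hc_def
    have hcmem : ∀ s, c s ∈ Icc (-tm) θ := by
      intro s
      exact ⟨le_min (le_max_right _ _) (by linarith), min_le_right _ _⟩
    have hccont : Continuous c := (continuous_id.max continuous_const).min continuous_const
    have hxt : Continuous fun s => x (c s) := hxc.comp_continuous hccont hcmem
    obtain ⟨C, hC⟩ := isCompact_Icc.exists_bound_of_continuousOn hxc
    have hC0 : 0 ≤ C := (norm_nonneg _).trans (hC _ (hcmem 0))
    have hGm : Measurable fun u => p u * x (c (u - τ u)) :=
      hpm.mul (hxt.measurable.comp (measurable_id.sub hτm))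
    have hGint : IntegrableOn (fun u => p u * x (c (u - τ u))) (Set.uIoc (0:ℝ) θ) volume := by
      apply Integrable.mono' (g := fun _ => C)
      · exact integrableOn_const measure_Ioc_lt_top.ne
      · exact hGm.aestronglyMeasurable.restrict
      · filter_upwards [ae_restrict_of_ae hp1] with u h1
        have h2 : ‖x (c (u - τ u))‖ ≤ C := hC _ (hcmem _)
        rw [Real.norm_eq_abs] at h2 ⊢
        rw [abs_mul]
        calc |p u| * |x (c (u - τ u))| ≤ 1 * C := by
              apply mul_le_mul h1 h2 (abs_nonneg _) (by norm_num)
          _ = C := one_mul C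
    rw [intervalIntegrable_iff]
    apply hGint.congr
    filter_upwards [ae_restrict_of_ae hτ_ae, ae_restrict_mem measurableSet_uIoc] with u h1 h2
    rw [uIoc_of_le hθpos.le] at h2
    have h3 : u - τ u ∈ Icc (-tm) θ := ⟨by linarith [h2.1], by linarith [hτ0 u, h2.2]⟩
    have h4 : c (u - τ u) = u - τ u := by
      rw [hc_def]
      simp only
      rw [max_eq_left h3.1, min_eq_left h3.2]
    rw [h4]
  have hFint' : ∀ a b : ℝ, a ∈ Icc (0:ℝ) θ → b ∈ Icc (0:ℝ) θ →
      IntervalIntegrable (fun u => p u * x (u - τ u)) volume a b := by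
    intro a b ha hb
    apply hFint.mono_set
    apply Set.uIcc_subset_uIcc
    · rw [Set.uIcc_of_le hθpos.le]; exact ha
    · rw [Set.uIcc_of_le hθpos.le]; exact hb
  -- the ratio function
  set ψ : ℝ → ℝ := fun t => if t = θ then |deriv x θ| / |deriv r θ| else |x t| / r t with hψ_def
  have hψθ : ψ θ = |deriv x θ| / |deriv r θ| := by rw [hψ_def]; simp
  have hψne : ∀ t, t ≠ θ → ψ t = |x t| / r t := by
    intro t ht
    rw [hψ_def]
    simp only [if_neg ht]
  have hslope : Tendsto (fun s => |x s| / r s) (nhdsWithin θ (Icc 0 θ \ {θ}))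
      (nhds (|deriv x θ| / |deriv r θ|)) := by
    have h1 : Tendsto (slope x θ) (nhdsWithin θ {θ}ᶜ) (nhds (deriv x θ)) :=
      hasDerivAt_iff_tendsto_slope.1 (hxD θ ⟨hθpos.le, le_rfl⟩)
    have h2 : Tendsto (slope r θ) (nhdsWithin θ {θ}ᶜ) (nhds (deriv r θ)) :=
      hasDerivAt_iff_tendsto_slope.1 (hrD θ hθpos.le)
    have h3 := h1.div h2 hdrθ.ne
    have h4 : Tendsto (fun s => slope x θ s / slope r θ s) (nhdsWithin θ (Icc 0 θ \ {θ}))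
        (nhds (deriv x θ / deriv r θ)) :=
      h3.mono_left (nhdsWithin_mono θ (fun s hs => hs.2))
    have h5 := h4.abs
    rw [abs_div] at h5
    apply Filter.Tendsto.congr' ?_ h5
    filter_upwards [self_mem_nhdsWithin] with s hs
    obtain ⟨⟨hs0, hsθ⟩, hne⟩ := hs
    have hne' : s ≠ θ := hne
    have hslt : s < θ := lt_of_le_of_ne hsθ hne'
    have hrs : 0 < r s := hrpos s hs0 hslt
    have hsub : s - θ ≠ 0 := sub_ne_zero.2 hne'
    rw [slope_def_field, slope_def_field, hxθ, hrθ, sub_zero, sub_zero]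
    have h6 : x s / (s - θ) / (r s / (s - θ)) = x s / r s := by
      field_simp
    rw [h6, abs_div, abs_of_pos hrs]
  have hψcont : ContinuousOn ψ (Icc 0 θ) := by
    intro t ht
    rcases eq_or_lt_of_le ht.2 with heq | hlt
    · subst heq
      have hsets : Icc (0:ℝ) t = (Icc 0 t \ {t}) ∪ {t} := by
        rw [diff_union_self]
        rw [union_eq_self_of_subset_right (singleton_subset_iff.2 (right_mem_Icc.2 hθpos.le))]
      rw [ContinuousWithinAt]
      rw [show nhdsWithin t (Icc 0 t) = nhdsWithin t (Icc 0 t \ {t}) ⊔ nhdsWithin t {t} by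
        rw [← nhdsWithin_union, ← hsets]]
      rw [Filter.tendsto_sup]
      constructor
      · rw [hψθ]
        apply Filter.Tendsto.congr' ?_ hslope
        filter_upwards [self_mem_nhdsWithin] with s hs
        exact (hψne s hs.2).symm
      · rw [nhdsWithin_singleton]
        exact tendsto_pure_nhds ψ t
    · have hne : t ≠ θ := ne_of_lt hlt
      have hrt : 0 < r t := hrpos t ht.1 hlt
      have hratio : ContinuousWithinAt (fun s => |x s| / r s) (Icc 0 θ) t :=
        ((hxc0θ t ht).abs).div (hrcont.continuousAt.continuousWithinAt) hrt.ne'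
      apply ContinuousWithinAt.congr_of_eventuallyEq hratio ?_ (hψne t hne)
      filter_upwards [mem_nhdsWithin_of_mem_nhds (Iio_mem_nhds hlt)] with s hs
      exact hψne s (ne_of_lt hs)
  obtain ⟨t₁, ht₁mem, ht₁max⟩ := isCompact_Icc.exists_isMaxOn (nonempty_Icc.2 hθpos.le) hψcont
  set Λ := ψ t₁ with hΛ_def
  have hψ0 : ψ 0 = |x 0| := by rw [hψne 0 (ne_of_lt hθpos), hr0, div_one]
  have hΛ0 : 0 ≤ Λ := by
    have h1 : ψ 0 ≤ ψ t₁ := ht₁max (left_mem_Icc.2 hθpos.le)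
    rw [hψ0] at h1
    exact (abs_nonneg _).trans h1
  have hkey : ∀ s ∈ Icc (0:ℝ) θ, |x s| ≤ Λ * r s := by
    intro s hs
    rcases eq_or_lt_of_le hs.2 with heq | hlt
    · rw [heq, hxθ, hrθ, mul_zero, abs_zero]
    · have h1 : ψ s ≤ Λ := ht₁max hs
      rw [hψne s (ne_of_lt hlt)] at h1
      exact (div_le_iff₀ (hrpos s hs.1 hlt)).1 h1
  have hΛM : Λ ≤ M := by
    by_contra hcon
    push_neg at hcon
    have hkey' : ∀ s ∈ Icc (-tm) θ, |x s| ≤ Λ * r s := by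
      intro s hs
      rcases le_or_gt s 0 with h | h
      · rw [hr1 s h, mul_one]
        exact (hM s ⟨hs.1, h⟩).trans hcon.le
      · exact hkey s ⟨h.le, hs.2⟩
    rcases eq_or_lt_of_le ht₁mem.1 with heq0 | h0pos
    · have h1 : Λ = |x 0| := by rw [hΛ_def, ← heq0, hψ0]
      have h2 := hM 0 h0mem
      rw [← h1] at h2
      linarith
    · obtain ⟨e, habse, hye, hDe⟩ :
          ∃ e : ℝ, |e| = 1 ∧ Λ * r t₁ - e * x t₁ = 0 ∧
            Λ * deriv r t₁ - e * deriv x t₁ = 0 := by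
        rcases eq_or_lt_of_le ht₁mem.2 with heq | hlt
        · refine ⟨if deriv x θ ≤ 0 then 1 else -1, ?_, ?_, ?_⟩
          · split <;> norm_num
          · rw [heq, hrθ, hxθ]; ring
          · have habs : |deriv x θ| = Λ * |deriv r θ| := by
              have h1 : Λ = |deriv x θ| / |deriv r θ| := by rw [hΛ_def, heq, hψθ]
              rw [h1, div_mul_cancel₀]
              exact abs_ne_zero.2 hdrθ.ne
            rw [heq]
            have h5 : |deriv r θ| = -deriv r θ := abs_of_neg hdrθ
            split_ifs with hsign
            · have h6 : |deriv x θ| = -deriv x θ := abs_of_nonpos hsign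
              rw [h6, h5] at habs
              linear_combination habs
            · have h6 : |deriv x θ| = deriv x θ := abs_of_pos (lt_of_not_ge hsign)
              rw [h6, h5] at habs
              linear_combination habs
        · have hrt₁ : 0 < r t₁ := hrpos t₁ ht₁mem.1 hlt
          have hxt₁ : |x t₁| = Λ * r t₁ := by
            have h1 : Λ = |x t₁| / r t₁ := by rw [hΛ_def, hψne t₁ (ne_of_lt hlt)]
            rw [h1, div_mul_cancel₀]
            exact hrt₁.ne'
          set e : ℝ := if 0 ≤ x t₁ then 1 else -1 with he_def
          have habse : |e| = 1 := by rw [he_def]; split <;> norm_num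
          have hex : e * x t₁ = |x t₁| := by
            rw [he_def]
            split_ifs with h
            · rw [one_mul, abs_of_nonneg h]
            · rw [abs_of_neg (lt_of_not_ge h)]; ring
          have hy0 : Λ * r t₁ - e * x t₁ = 0 := by rw [hex, hxt₁]; ring
          have hDer : HasDerivAt (fun s => Λ * r s - e * x s)
              (Λ * deriv r t₁ - e * deriv x t₁) t₁ :=
            ((hrD t₁ ht₁mem.1).const_mul Λ).sub ((hxD t₁ ht₁mem).const_mul e)
          have hmin : IsLocalMin (fun s => Λ * r s - e * x s) t₁ := by
            have hnb : Ioo (0:ℝ) θ ∈ nhds t₁ := isOpen_Ioo.mem_nhds ⟨h0pos, hlt⟩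
            apply Filter.eventually_of_mem hnb
            intro s hs
            have h1 : |x s| ≤ Λ * r s := hkey s ⟨hs.1.le, hs.2.le⟩
            have h2 : e * x s ≤ |x s| := by
              calc e * x s ≤ |e * x s| := le_abs_self _
                _ = |x s| := by rw [abs_mul, habse, one_mul]
            show Λ * r t₁ - e * x t₁ ≤ Λ * r s - e * x s
            linarith [hy0]
          exact ⟨e, habse, hy0, hmin.hasDerivAt_eq_zero hDer⟩
      set y := fun s => Λ * r s - e * x s with hy_def
      set D := fun s => Λ * deriv r s - e * deriv x s with hD_def
      have hyD : ∀ s ∈ Icc (0:ℝ) θ, HasDerivAt y (D s) s := fun s hs =>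
        ((hrD s hs.1).const_mul Λ).sub ((hxD s hs).const_mul e)
      have ht₁θ : t₁ ≤ θ := ht₁mem.2
      have hIccsub2 : Icc (0:ℝ) t₁ ⊆ Icc (0:ℝ) θ := Icc_subset_Icc le_rfl ht₁θ
      have hDnonneg : ∀ s ∈ Icc (0:ℝ) t₁, 0 ≤ D s := by
        intro s hs
        have hsmem : s ∈ Icc (0:ℝ) θ := hIccsub2 hs
        have hint1 : IntervalIntegrable (fun u => p u * x (u - τ u)) volume s t₁ :=
          hFint' s t₁ hsmem ht₁mem
        have heq : D t₁ - D s = ∫ u in s..t₁, (e * (p u * x (u - τ u)) - Λ * r (u - Δ)) := by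
          have hxd : deriv x t₁ = deriv x s - ∫ u in s..t₁, p u * x (u - τ u) :=
            hxI s hsmem t₁ ht₁mem
          have hradd : (∫ u in (0:ℝ)..s, r (u - Δ)) + ∫ u in s..t₁, r (u - Δ)
              = ∫ u in (0:ℝ)..t₁, r (u - Δ) :=
            intervalIntegral.integral_add_adjacent_intervals (hrshift_int 0 s) (hrshift_int s t₁)
          have hrt : deriv r t₁ = -∫ u in (0:ℝ)..t₁, r (u - Δ) := hrI t₁ ht₁mem.1
          have hrs : deriv r s = -∫ u in (0:ℝ)..s, r (u - Δ) := hrI s hsmem.1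
          have hsplit : (∫ u in s..t₁, (e * (p u * x (u - τ u)) - Λ * r (u - Δ)))
              = (∫ u in s..t₁, e * (p u * x (u - τ u))) - ∫ u in s..t₁, Λ * r (u - Δ) :=
            intervalIntegral.integral_sub (hint1.const_mul e) ((hrshift_int s t₁).const_mul Λ)
          simp only [hD_def]
          rw [hxd, hrt, hrs, hsplit, intervalIntegral.integral_const_mul,
            intervalIntegral.integral_const_mul, ← hradd]
          ring
        have hle : (∫ u in s..t₁, (e * (p u * x (u - τ u)) - Λ * r (u - Δ))) ≤ 0 := by
          have hae2 : (fun u => e * (p u * x (u - τ u)) - Λ * r (u - Δ))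
              ≤ᶠ[ae (volume.restrict (Icc s t₁))] fun _ => (0:ℝ) := by
            filter_upwards [ae_restrict_of_ae hp1, ae_restrict_of_ae hτ_ae,
              ae_restrict_mem measurableSet_Icc] with u h1 h2 h3
            have hu0 : 0 ≤ u := le_trans hs.1 h3.1
            have huθ : u ≤ θ := h3.2.trans ht₁θ
            have hmem2 : u - τ u ∈ Icc (-tm) θ := ⟨by linarith, by linarith [hτ0 u]⟩
            have e1 : e * (p u * x (u - τ u)) ≤ |x (u - τ u)| := by
              calc e * (p u * x (u - τ u)) ≤ |e * (p u * x (u - τ u))| := le_abs_self _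
                _ = |e| * (|p u| * |x (u - τ u)|) := by rw [abs_mul, abs_mul]
                _ = |p u| * |x (u - τ u)| := by rw [habse, one_mul]
                _ ≤ 1 * |x (u - τ u)| := mul_le_mul_of_nonneg_right h1 (abs_nonneg _)
                _ = |x (u - τ u)| := one_mul _
            have e2 : |x (u - τ u)| ≤ Λ * r (u - τ u) := hkey' _ hmem2
            have e3 : r (u - τ u) ≤ r (u - Δ) :=
              hrmono (u - Δ) (u - τ u) (by linarith) (by linarith [hτ0 u])
            have e4 : Λ * r (u - τ u) ≤ Λ * r (u - Δ) := mul_le_mul_of_nonneg_left e3 hΛ0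
            show e * (p u * x (u - τ u)) - Λ * r (u - Δ) ≤ (0:ℝ)
            linarith
          calc (∫ u in s..t₁, (e * (p u * x (u - τ u)) - Λ * r (u - Δ)))
              ≤ ∫ _ in s..t₁, (0:ℝ) :=
                intervalIntegral.integral_mono_ae_restrict hs.2
                  ((hint1.const_mul e).sub ((hrshift_int s t₁).const_mul Λ))
                  intervalIntegrable_const hae2
            _ = 0 := by simp
        have hDt₁ : D t₁ = 0 := hDe
        have h6 : D t₁ - D s ≤ 0 := heq ▸ hle
        linarith
      have hycont : ContinuousOn y (Icc 0 t₁) := fun s hs =>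
        ((hyD s (hIccsub2 hs)).continuousAt).continuousWithinAt
      have hymono : MonotoneOn y (Icc 0 t₁) := by
        apply monotoneOn_of_deriv_nonneg (convex_Icc 0 t₁) hycont
        · intro s hs
          rw [interior_Icc] at hs
          exact (hyD s (hIccsub2 ⟨hs.1.le, hs.2.le⟩)).differentiableAt.differentiableWithinAt
        · intro s hs
          rw [interior_Icc] at hs
          rw [(hyD s (hIccsub2 ⟨hs.1.le, hs.2.le⟩)).deriv]
          exact hDnonneg s ⟨hs.1.le, hs.2.le⟩
      have h7 : y 0 ≤ y t₁ :=
        hymono (left_mem_Icc.2 h0pos.le) (right_mem_Icc.2 h0pos.le) h0pos.le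
      have h8 : y t₁ = 0 := hye
      have h9 : e * x 0 ≤ M := by
        calc e * x 0 ≤ |e * x 0| := le_abs_self _
          _ = |x 0| := by rw [abs_mul, habse, one_mul]
          _ ≤ M := hM 0 h0mem
      have h10 : y 0 = Λ - e * x 0 := by
        show Λ * r 0 - e * x 0 = Λ - e * x 0
        rw [hr0]; ring
      linarith
  intro t ht
  calc |x t| ≤ Λ * r t := hkey t ht
    _ ≤ M * r t := mul_le_mul_of_nonneg_right hΛM (hrnn t ht.2)
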